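/- Let G be a central extension setting: G finite with g ∈ Z(G), ρ : G → Aut(M) a representation on a free ℤ-module of finite rank. Write M ⊗ ℚ = N₁ ⊕ ⋯ ⊕ N_m as a direct sum of ℚ-irreducible subrepresentations and let I = {i : ρ(g) does not act as the identity on N_i}. Then V_g(M) := √(Im(id_M − ρ(g))) (the radical in M) equals M ∩ ⊕_{i∈I} N_i. -/

import Mathlib

open TensorProduct

theorem stmt17 (G : Type*) [Group G] [Fintype G]
    (M : Type*) [AddCommGroup M] [Module.Free ℤ M] [Module.Finite ℤ M]
    (ρ : G →* (M ≃ₗ[ℤ] M)) (g : G) (hg : g ∈ Subgroup.center G)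
    (ι : Type*) [Fintype ι] [DecidableEq ι]
    (N : ι → Submodule ℚ (ℚ ⊗[ℤ] M))
    (hinternal : DirectSum.IsInternal N)
    (hinv : ∀ (i : ι) (h : G),
      (N i).map (LinearMap.baseChange ℚ (ρ h : M →ₗ[ℤ] M)) ≤ N i)
    (hne : ∀ i : ι, N i ≠ ⊥)
    (hirr : ∀ (i : ι) (W : Submodule ℚ (ℚ ⊗[ℤ] M)), W ≤ N i →
      (∀ h : G, W.map (LinearMap.baseChange ℚ (ρ h : M →ₗ[ℤ] M)) ≤ W) →
      W = ⊥ ∨ W = N i) :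
    ∀ v : M,
      (∃ r : ℤ, r ≠ 0 ∧ ∃ u : M, r • v = u - ρ g u) ↔
      ((1 : ℚ) ⊗ₜ[ℤ] v ∈
        ⨆ (i : ι) (_ : ¬ ∀ x ∈ N i, LinearMap.baseChange ℚ (ρ g : M →ₗ[ℤ] M) x = x), N i) := by
  classical
  set ψ : G → (ℚ ⊗[ℤ] M →ₗ[ℚ] ℚ ⊗[ℤ] M) :=
    fun h => LinearMap.baseChange ℚ (ρ h : M →ₗ[ℤ] M) with hψ
  set φ : ℚ ⊗[ℤ] M →ₗ[ℚ] ℚ ⊗[ℤ] M := LinearMap.id - ψ g with hφ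
  -- composition of ψ's
  have hψmul : ∀ (a b : G) (x : ℚ ⊗[ℤ] M), ψ a (ψ b x) = ψ (a * b) x := by
    intro a b x
    induction x using TensorProduct.induction_on with
    | zero => simp
    | tmul q m => simp [hψ, LinearMap.baseChange_tmul, map_mul]
    | add x y hx hy => simp [map_add, hx, hy]
  -- commutation of φ with ψ h
  have hcomm : ∀ (h : G) (x : ℚ ⊗[ℤ] M), ψ h (φ x) = φ (ψ h x) := by
    intro h x
    have hgc := (Subgroup.mem_center_iff.mp hg) h
    simp [hφ, map_sub, hψmul, hgc]
  -- φ preserves each N i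
  have hφinv : ∀ (i : ι), ∀ x ∈ N i, φ x ∈ N i := by
    intro i x hx
    have : ψ g x ∈ N i := hinv i g ⟨x, hx, rfl⟩
    simpa [hφ] using sub_mem hx this
  -- injectivity of 1 ⊗ₜ ·
  have hinj : ∀ m : M, (1 : ℚ) ⊗ₜ[ℤ] m = 0 → m = 0 := by
    intro m hm
    let b := Module.Free.chooseBasis ℤ M
    have hr : ∀ i, b.repr m i = 0 := by
      intro i
      have := congrArg (fun x => (b.baseChange ℚ).repr x i) hm
      simp only [Module.Basis.baseChange_repr_tmul, map_zero, Finsupp.coe_zero, Pi.zero_apply] at this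
      have : (b.repr m i : ℚ) = 0 := by
        simpa [zsmul_eq_mul] using this
      exact_mod_cast this
    have : b.repr m = 0 := Finsupp.ext hr
    simpa using congrArg (b.repr.symm) this
  -- ℤ-scalar on the tensor product
  have hzsmul : ∀ (r : ℤ) (x : ℚ ⊗[ℤ] M), (r : ℚ) • x = r • x := fun r x =>
    Int.cast_smul_eq_zsmul ℚ r x
  have htsmul : ∀ (r : ℤ) (m : M), (r : ℚ) • ((1:ℚ) ⊗ₜ[ℤ] m) = (1:ℚ) ⊗ₜ[ℤ] (r • m) := by
    intro r m
    rw [hzsmul, tmul_smul]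
  -- clearing denominators
  have hden : ∀ w : ℚ ⊗[ℤ] M, ∃ r : ℤ, r ≠ 0 ∧ ∃ u : M, (r : ℚ) • w = (1:ℚ) ⊗ₜ[ℤ] u := by
    intro w
    induction w using TensorProduct.induction_on with
    | zero => exact ⟨1, one_ne_zero, 0, by simp⟩
    | tmul q m =>
      refine ⟨(q.den : ℤ), by exact_mod_cast q.den_ne_zero, q.num • m, ?_⟩
      rw [← htsmul, smul_tmul', smul_tmul']
      congr 1
      simp only [smul_eq_mul, mul_one]
      push_cast
      exact q.den_mul_eq_num
    | add x y hx hy =>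
      obtain ⟨r1, hr1, u1, hu1⟩ := hx
      obtain ⟨r2, hr2, u2, hu2⟩ := hy
      refine ⟨r1 * r2, mul_ne_zero hr1 hr2, r2 • u1 + r1 • u2, ?_⟩
      have hsplit : ((r1 * r2 : ℤ) : ℚ) • (x + y)
          = (r2 : ℚ) • ((r1 : ℚ) • x) + (r1 : ℚ) • ((r2 : ℚ) • y) := by
        push_cast
        rw [smul_add, smul_smul, smul_smul, mul_comm (r2:ℚ)]
      rw [hsplit, hu1, hu2, htsmul, htsmul, ← tmul_add]
  -- φ applied to 1 ⊗ u
  have hφtmul : ∀ u : M, φ ((1:ℚ) ⊗ₜ[ℤ] u) = (1:ℚ) ⊗ₜ[ℤ] (u - ρ g u) := by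
    intro u
    simp [hφ, hψ, LinearMap.baseChange_tmul, tmul_sub]
  intro v
  constructor
  · rintro ⟨r, hr, u, hu⟩
    -- 1 ⊗ u decomposes; φ of it lands in the sup
    have hmem : φ ((1:ℚ) ⊗ₜ[ℤ] u) ∈
        ⨆ (i : ι) (_ : ¬ ∀ x ∈ N i, ψ g x = x), N i := by
      have htop : (1:ℚ) ⊗ₜ[ℤ] u ∈ ⨆ i, N i := by
        rw [hinternal.submodule_iSup_eq_top]; trivial
      refine Submodule.iSup_induction N
        (motive := fun x => φ x ∈ ⨆ (i : ι) (_ : ¬ ∀ x ∈ N i, ψ g x = x), N i) htop ?_ (by simp) ?_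
      · intro i x hx
        by_cases hi : ∀ y ∈ N i, ψ g y = y
        · have : φ x = 0 := by simp [hφ, hi x hx]
          simp [this]
        · exact Submodule.mem_iSup_of_mem i (Submodule.mem_iSup_of_mem hi (hφinv i x hx))
      · intro x y hx hy
        rw [map_add]; exact add_mem hx hy
    have key : (1:ℚ) ⊗ₜ[ℤ] v = ((r:ℚ))⁻¹ • φ ((1:ℚ) ⊗ₜ[ℤ] u) := by
      rw [hφtmul, ← hu, ← htsmul, smul_smul, inv_mul_cancel₀ (by exact_mod_cast hr), one_smul]
    rw [key]
    exact Submodule.smul_mem _ _ hmem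
  · intro hv
    -- S = map φ S
    have hsurj : ∀ i : ι, ¬ (∀ x ∈ N i, ψ g x = x) → (N i).map φ = N i := by
      intro i hi
      rcases hirr i ((N i).map φ) (fun y ⟨x, hx, hxy⟩ => hxy ▸ hφinv i x hx)
          (fun h y ⟨z, ⟨x, hx, hxz⟩, hzy⟩ => by
            refine ⟨ψ h x, hinv i h ⟨x, hx, rfl⟩, ?_⟩
            rw [← hzy, ← hxz, hcomm]) with hbot | htop
      · exfalso
        apply hi
        intro x hx
        have : φ x = 0 := by
          have : φ x ∈ (⊥ : Submodule ℚ (ℚ ⊗[ℤ] M)) := hbot ▸ ⟨x, hx, rfl⟩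
          simpa using this
        have := sub_eq_zero.mp (by simpa [hφ] using this)
        exact this.symm
      · exact htop
    have hmapS : Submodule.map φ (⨆ (i : ι) (_ : ¬ ∀ x ∈ N i, ψ g x = x), N i)
        = ⨆ (i : ι) (_ : ¬ ∀ x ∈ N i, ψ g x = x), N i := by
      rw [Submodule.map_iSup]
      refine iSup_congr fun i => ?_
      by_cases hi : ∀ x ∈ N i, ψ g x = x
      · rw [iSup_neg (not_not_intro hi)]
        exact Submodule.map_bot φ
      · rw [iSup_pos hi]
        exact hsurj i hi
    obtain ⟨w, hwS, hw⟩ : ∃ w, w ∈ (⨆ (i : ι) (_ : ¬ ∀ x ∈ N i, ψ g x = x), N i) ∧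
        φ w = (1:ℚ) ⊗ₜ[ℤ] v := by
      have := hmapS ▸ hv
      exact this
    obtain ⟨r, hr, u, hu⟩ := hden w
    refine ⟨r, hr, u, ?_⟩
    have h1 : φ ((1:ℚ) ⊗ₜ[ℤ] u) = (1:ℚ) ⊗ₜ[ℤ] (r • v) := by
      rw [← hu, map_smul, hw, htsmul]
    rw [hφtmul] at h1
    have : (1:ℚ) ⊗ₜ[ℤ] ((u - ρ g u) - r • v) = 0 := by
      rw [tmul_sub, h1, sub_self]
    exact (sub_eq_zero.mp (hinj _ this)).symm
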